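/- The fermionic Fock space 𝓕 is irreducible under the Clifford operators: every ℂ-linear subspace of 𝓕 that is invariant under ψ(k) and ψ*(k) for all integers k and contains a nonzero vector is equal to all of 𝓕. -/

import Mathlib

open scoped Classical

/-- A semi-infinite monomial: a strictly decreasing sequence `i : ℕ → ℤ`
(written `i₀ > i₁ > i₂ > ⋯`) such that `i n = m - n` for all sufficiently
large `n`, for some integer `m` (the charge). -/
structure SIM : Type where
  seq : ℕ → ℤ
  strictAnti : StrictAnti seq
  charge_exists : ∃ m : ℤ, ∃ N : ℕ, ∀ n ≥ N, seq n = m - n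

namespace SIM

/-- `v` has charge `m` if `v n = m - n` for all sufficiently large `n`. -/
def HasCharge (v : SIM) (m : ℤ) : Prop :=
  ∃ N : ℕ, ∀ n ≥ N, v.seq n = m - n

/-- The charge of a semi-infinite monomial. -/
noncomputable def charge (v : SIM) : ℤ := v.charge_exists.choose

theorem exists_seq_lt (v : SIM) (k : ℤ) : ∃ n, v.seq n < k := by
  obtain ⟨m, N, hN⟩ := v.charge_exists
  refine ⟨max N (m - k + 1).toNat, ?_⟩
  rw [hN _ (le_max_left _ _)]
  have h1 : (m - k + 1).toNat ≤ max N (m - k + 1).toNat := le_max_right _ _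
  omega

/-- The position at which `k` is inserted into `v`: the number of entries of `v`
that are greater than `k` (assuming `k` does not occur in `v`). -/
noncomputable def insIdx (v : SIM) (k : ℤ) : ℕ := sInf {n : ℕ | v.seq n < k}

/-- The monomial obtained from `v` by inserting the entry `k`
(meaningful when `k` does not occur among the entries of `v`; in the unused
case where `k` does occur we simply return `v`). -/
noncomputable def insert (v : SIM) (k : ℤ) : SIM :=
  if h : k ∈ Set.range v.seq then v
  else
    { seq := fun n =>
        if n < v.insIdx k then v.seq n else if n = v.insIdx k then k else v.seq (n - 1)
      strictAnti := by
        have hs : v.seq (v.insIdx k) < k := Nat.sInf_mem (v.exists_seq_lt k)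
        have hgt : ∀ n, n < v.insIdx k → k < v.seq n := by
          intro n hn
          have h1 : ¬ v.seq n < k := Nat.notMem_of_lt_sInf hn
          have h2 : v.seq n ≠ k := fun hh => h ⟨n, hh⟩
          omega
        apply strictAnti_nat_of_succ_lt
        intro n

        rcases lt_trichotomy (n + 1) (v.insIdx k) with h1 | h1 | h1
        · rw [if_pos h1, if_pos (by omega)]
          exact v.strictAnti (Nat.lt_succ_self n)
        · rw [if_neg (by omega), if_pos h1, if_pos (by omega)]
          exact hgt n (by omega)
        · rw [if_neg (by omega), if_neg (by omega)]
          rcases eq_or_lt_of_le (Nat.le_of_lt_succ h1) with h2 | h2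
          · rw [if_neg (by omega), if_pos h2.symm]
            simpa [← h2] using hs
          · rw [if_neg (by omega), if_neg (by omega)]
            exact v.strictAnti (by omega)
      charge_exists := by
        obtain ⟨m, N, hN⟩ := v.charge_exists
        refine ⟨m + 1, max N (v.insIdx k) + 1, fun n hn => ?_⟩

        beta_reduce
        rw [if_neg (by omega), if_neg (by omega), hN (n - 1) (by omega)]
        omega }

/-- The position of the entry `k` in `v` (assuming `k` occurs in `v`). -/
noncomputable def delIdx (v : SIM) (k : ℤ) : ℕ := sInf {n : ℕ | v.seq n ≤ k}

/-- The monomial obtained from `v` by deleting the entry `k`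
(meaningful when `k` occurs among the entries of `v`). -/
noncomputable def delete (v : SIM) (k : ℤ) : SIM where
  seq n := if n < v.delIdx k then v.seq n else v.seq (n + 1)
  strictAnti := by
    apply strictAnti_nat_of_succ_lt
    intro n

    split_ifs <;> exact v.strictAnti (by omega)
  charge_exists := by
    obtain ⟨m, N, hN⟩ := v.charge_exists
    refine ⟨m - 1, max N (v.delIdx k), fun n hn => ?_⟩

    beta_reduce
    rw [if_neg (by omega), hN (n + 1) (by omega)]
    omega

end SIM

/-- The fermionic Fock space: the free ℂ-vector space on the set of all
semi-infinite monomials (of all charges). -/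
abbrev Fock : Type := SIM →₀ ℂ

/-- The wedging operator `ψ(k)`: it sends a basis monomial `i₀ > i₁ > ⋯` to `0`
if `k = i_s` for some `s`, and otherwise to `(−1)^s` times the basis monomial
obtained by inserting `k`, where `s` is the number of entries greater
than `k`. -/
noncomputable def psi (k : ℤ) : Fock →ₗ[ℂ] Fock :=
  Finsupp.lsum ℂ fun v =>
    if k ∈ Set.range v.seq then 0
    else ((-1 : ℂ) ^ v.insIdx k) • Finsupp.lsingle (v.insert k)

/-- The contracting operator `ψ*(k)`: it sends a basis monomial `i₀ > i₁ > ⋯`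
to `(−1)^s` times the basis monomial obtained by deleting `i_s` if `k = i_s`,
and to `0` if `k` does not occur among the entries. -/
noncomputable def psiStar (k : ℤ) : Fock →ₗ[ℂ] Fock :=
  Finsupp.lsum ℂ fun v =>
    if k ∈ Set.range v.seq then ((-1 : ℂ) ^ v.delIdx k) • Finsupp.lsingle (v.delete k)
    else 0

section Aux

namespace SIM

theorem ext' {v w : SIM} (h : v.seq = w.seq) : v = w := by
  cases v; cases w; simpa using h

theorem eq_of_range_eq {v w : SIM} (h : Set.range v.seq = Set.range w.seq) : v = w := by
  apply ext'
  funext n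
  induction n using Nat.strong_induction_on with
  | _ n ih =>
    have key : ∀ (u u' : SIM), Set.range u.seq = Set.range u'.seq →
        (∀ j, j < n → u.seq j = u'.seq j) → u.seq n ≤ u'.seq n := by
      intro u u' hr hj
      have hmem : u.seq n ∈ Set.range u'.seq := hr ▸ Set.mem_range_self n
      obtain ⟨m, hm⟩ := hmem
      by_contra hlt
      push_neg at hlt
      have hmn : m < n := by
        by_contra hge
        push_neg at hge
        have h2 := u'.strictAnti.antitone hge
        omega
      have heq : u.seq m = u.seq n := by rw [← hj m hmn] at hm; omega
      have := u.strictAnti.injective heq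
      omega
    exact le_antisymm (key v w h ih) (key w v h.symm fun j hj => (ih j hj).symm)

theorem delIdx_eq {v : SIM} {k : ℤ} {n : ℕ} (h : v.seq n = k) : v.delIdx k = n := by
  have hne : n ∈ {n' : ℕ | v.seq n' ≤ k} := by simp [h.le]
  refine le_antisymm (Nat.sInf_le hne) ?_
  have hmem : v.seq (v.delIdx k) ≤ k := Nat.sInf_mem (⟨n, hne⟩ : Set.Nonempty {n' : ℕ | v.seq n' ≤ k})
  by_contra hlt
  push_neg at hlt
  have := v.strictAnti hlt
  omega

theorem insIdx_eq {v : SIM} {k : ℤ} {n : ℕ} (h1 : v.seq n < k)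
    (h2 : ∀ j, j < n → k < v.seq j) : v.insIdx k = n := by
  have hne : n ∈ {n' : ℕ | v.seq n' < k} := by simpa using h1
  refine le_antisymm (Nat.sInf_le hne) ?_
  have hmem : v.seq (v.insIdx k) < k := Nat.sInf_mem (⟨n, hne⟩ : Set.Nonempty {n' : ℕ | v.seq n' < k})
  by_contra hlt
  push_neg at hlt
  have := h2 _ hlt
  omega

theorem delete_seq (v : SIM) (k : ℤ) (j : ℕ) :
    (v.delete k).seq j = if j < v.delIdx k then v.seq j else v.seq (j + 1) := rfl

theorem insert_seq {v : SIM} {k : ℤ} (h : k ∉ Set.range v.seq) (j : ℕ) :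
    (v.insert k).seq j =
      if j < v.insIdx k then v.seq j else if j = v.insIdx k then k else v.seq (j - 1) := by
  rw [SIM.insert, dif_neg h]

theorem range_delete {v : SIM} {k : ℤ} (h : k ∈ Set.range v.seq) :
    Set.range (v.delete k).seq = Set.range v.seq \ {k} := by
  obtain ⟨n, hn⟩ := h
  have hd : v.delIdx k = n := delIdx_eq hn
  ext z
  simp only [Set.mem_range, Set.mem_diff, Set.mem_singleton_iff]
  constructor
  · rintro ⟨j, rfl⟩
    rw [delete_seq, hd]
    split_ifs with hj
    · exact ⟨⟨j, rfl⟩, fun hzk => by have := v.strictAnti.injective (hzk.trans hn.symm); omega⟩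
    · refine ⟨⟨j + 1, rfl⟩, fun hzk => ?_⟩
      have := v.strictAnti.injective (hzk.trans hn.symm); omega
  · rintro ⟨⟨j, rfl⟩, hzk⟩
    have hjn : j ≠ n := fun hh => hzk (hh ▸ hn)
    rcases lt_or_gt_of_ne hjn with hj | hj
    · exact ⟨j, by rw [delete_seq, hd, if_pos hj]⟩
    · refine ⟨j - 1, ?_⟩
      rw [delete_seq, hd, if_neg (by omega)]
      congr 1
      omega

theorem notMem_range_delete {v : SIM} {k : ℤ} (h : k ∈ Set.range v.seq) :
    k ∉ Set.range (v.delete k).seq := by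
  rw [range_delete h]
  simp

theorem insIdx_delete {v : SIM} {k : ℤ} (h : k ∈ Set.range v.seq) :
    (v.delete k).insIdx k = v.delIdx k := by
  obtain ⟨n, hn⟩ := h
  have hd : v.delIdx k = n := delIdx_eq hn
  rw [hd]
  apply insIdx_eq
  · rw [delete_seq, hd, if_neg (lt_irrefl n), ← hn]
    exact v.strictAnti (by omega)
  · intro j hj
    rw [delete_seq, hd, if_pos hj, ← hn]
    exact v.strictAnti hj

theorem insert_delete {v : SIM} {k : ℤ} (h : k ∈ Set.range v.seq) :
    (v.delete k).insert k = v := by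
  obtain ⟨n, hn⟩ := id h
  have hd : v.delIdx k = n := delIdx_eq hn
  apply ext'
  funext j
  rw [insert_seq (notMem_range_delete h), insIdx_delete h, hd]
  rcases lt_trichotomy j n with hj | hj | hj
  · rw [if_pos hj, delete_seq, hd, if_pos hj]
  · rw [if_neg (by omega), if_pos hj, hj, hn]
  · rw [if_neg (by omega), if_neg (by omega), delete_seq, hd, if_neg (by omega)]
    congr 1
    omega

theorem mem_range_insert {v : SIM} {k : ℤ} (h : k ∉ Set.range v.seq) :
    k ∈ Set.range (v.insert k).seq := by
  refine ⟨v.insIdx k, ?_⟩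
  rw [insert_seq h, if_neg (lt_irrefl _), if_pos rfl]

theorem delIdx_insert {v : SIM} {k : ℤ} (h : k ∉ Set.range v.seq) :
    (v.insert k).delIdx k = v.insIdx k := by
  apply delIdx_eq
  rw [insert_seq h, if_neg (lt_irrefl _), if_pos rfl]

theorem delete_insert {v : SIM} {k : ℤ} (h : k ∉ Set.range v.seq) :
    (v.insert k).delete k = v := by
  apply ext'
  funext j
  rw [delete_seq, delIdx_insert h]
  split_ifs with hj
  · rw [insert_seq h, if_pos hj]
  · rw [insert_seq h, if_neg (by omega), if_neg (by omega), Nat.add_sub_cancel]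

theorem range_insert {v : SIM} {k : ℤ} (h : k ∉ Set.range v.seq) :
    Set.range (v.insert k).seq = Set.range v.seq ∪ {k} := by
  have hs : v.seq (v.insIdx k) < k := Nat.sInf_mem (v.exists_seq_lt k)
  ext z
  simp only [Set.mem_range, Set.mem_union, Set.mem_singleton_iff]
  constructor
  · rintro ⟨j, rfl⟩
    rw [insert_seq h]
    split_ifs with h1 h2
    · exact Or.inl ⟨j, rfl⟩
    · exact Or.inr rfl
    · exact Or.inl ⟨j - 1, rfl⟩
  · rintro (⟨j, rfl⟩ | rfl)
    · by_cases hj : j < v.insIdx k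
      · exact ⟨j, by rw [insert_seq h, if_pos hj]⟩
      · refine ⟨j + 1, ?_⟩
        rw [insert_seq h, if_neg (by omega), if_neg (by omega)]
        congr 1
    · exact mem_range_insert h

theorem diff_finite (v w : SIM) : (Set.range v.seq \ Set.range w.seq).Finite := by
  obtain ⟨m, N, hN⟩ := w.charge_exists
  apply Set.Finite.subset (Set.finite_Ioc (m - N) (v.seq 0))
  rintro z ⟨⟨j, rfl⟩, hz⟩
  constructor
  · by_contra hle
    push_neg at hle
    apply hz
    refine ⟨(m - v.seq j).toNat, ?_⟩
    rw [hN _ (by omega)]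
    omega
  · exact v.strictAnti.antitone (Nat.zero_le j)

end SIM

theorem psi_single (k : ℤ) (v : SIM) (c : ℂ) :
    psi k (Finsupp.single v c) =
      if k ∈ Set.range v.seq then 0
      else ((-1 : ℂ) ^ v.insIdx k) • Finsupp.single (v.insert k) c := by
  rw [psi, Finsupp.lsum_single]
  split_ifs with h
  · rfl
  · simp

theorem psiStar_single (k : ℤ) (v : SIM) (c : ℂ) :
    psiStar k (Finsupp.single v c) =
      if k ∈ Set.range v.seq then ((-1 : ℂ) ^ v.delIdx k) • Finsupp.single (v.delete k) c
      else 0 := by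
  rw [psiStar, Finsupp.lsum_single]
  split_ifs with h
  · simp
  · rfl

theorem psi_psiStar_single {k : ℤ} {v : SIM} (h : k ∈ Set.range v.seq) (c : ℂ) :
    psi k (psiStar k (Finsupp.single v c)) = Finsupp.single v c := by
  rw [psiStar_single, if_pos h, map_smul, psi_single, if_neg (SIM.notMem_range_delete h),
    SIM.insIdx_delete h, SIM.insert_delete h, smul_smul, ← mul_pow, neg_mul_neg, one_mul,
    one_pow, one_smul]

theorem psi_psiStar_single_zero {k : ℤ} {v : SIM} (h : k ∉ Set.range v.seq) (c : ℂ) :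
    psi k (psiStar k (Finsupp.single v c)) = 0 := by
  rw [psiStar_single, if_neg h, map_zero]

theorem psiStar_psi_single {k : ℤ} {v : SIM} (h : k ∉ Set.range v.seq) (c : ℂ) :
    psiStar k (psi k (Finsupp.single v c)) = Finsupp.single v c := by
  rw [psi_single, if_neg h, map_smul, psiStar_single, if_pos (SIM.mem_range_insert h),
    SIM.delIdx_insert h, SIM.delete_insert h, smul_smul, ← mul_pow, neg_mul_neg, one_mul,
    one_pow, one_smul]

theorem psiStar_psi_single_zero {k : ℤ} {v : SIM} (h : k ∈ Set.range v.seq) (c : ℂ) :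
    psiStar k (psi k (Finsupp.single v c)) = 0 := by
  rw [psi_single, if_pos h, map_zero]

theorem D_apply (k : ℤ) (x : Fock) (u : SIM) :
    psi k (psiStar k x) u = if k ∈ Set.range u.seq then x u else 0 := by
  induction x using Finsupp.induction_linear with
  | zero => simp
  | add f g hf hg =>
    simp only [map_add, Finsupp.add_apply, hf, hg]
    split_ifs <;> simp
  | single a b =>
    by_cases h : k ∈ Set.range a.seq
    · rw [psi_psiStar_single h]
      split_ifs with hu
      · rfl
      · exact Finsupp.single_eq_of_ne (Ne.symm fun (hau : a = u) => hu (by rw [← hau]; exact h))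
    · rw [psi_psiStar_single_zero h]
      simp only [Finsupp.zero_apply]
      split_ifs with hu
      · exact (Finsupp.single_eq_of_ne (Ne.symm fun (hau : a = u) => h (by rw [hau]; exact hu))).symm
      · rfl

theorem D'_apply (k : ℤ) (x : Fock) (u : SIM) :
    psiStar k (psi k x) u = if k ∉ Set.range u.seq then x u else 0 := by
  induction x using Finsupp.induction_linear with
  | zero => simp
  | add f g hf hg =>
    simp only [map_add, Finsupp.add_apply, hf, hg]
    split_ifs <;> simp
  | single a b =>
    by_cases h : k ∈ Set.range a.seq
    · rw [psiStar_psi_single_zero h]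
      simp only [Finsupp.zero_apply]
      split_ifs with hu
      all_goals first
        | rfl
        | exact (Finsupp.single_eq_of_ne (Ne.symm fun (hau : a = u) => hu (by rw [← hau]; exact h))).symm
        | exact (Finsupp.single_eq_of_ne (Ne.symm fun (hau : a = u) =>
            (not_not.mp hu) (by rw [← hau]; exact h))).symm
    · rw [psiStar_psi_single h]
      split_ifs with hu
      all_goals first
        | rfl
        | exact Finsupp.single_eq_of_ne (Ne.symm fun (hau : a = u) => h (by rw [hau]; exact hu))
        | exact Finsupp.single_eq_of_ne (Ne.symm fun (hau : a = u) => h (by rw [hau]; exact not_not.mp hu))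

theorem single_delete_mem {W : Submodule ℂ Fock}
    (hpsiStar : ∀ k : ℤ, ∀ x ∈ W, psiStar k x ∈ W) {v : SIM} {k : ℤ}
    (h : k ∈ Set.range v.seq) (hv : Finsupp.single v (1 : ℂ) ∈ W) :
    Finsupp.single (v.delete k) (1 : ℂ) ∈ W := by
  have h1 : psiStar k (Finsupp.single v (1 : ℂ)) ∈ W := hpsiStar k _ hv
  rw [psiStar_single, if_pos h] at h1
  have h2 := W.smul_mem ((-1 : ℂ) ^ v.delIdx k) h1
  rwa [smul_smul, ← mul_pow, neg_mul_neg, one_mul, one_pow, one_smul] at h2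

theorem single_insert_mem {W : Submodule ℂ Fock}
    (hpsi : ∀ k : ℤ, ∀ x ∈ W, psi k x ∈ W) {v : SIM} {k : ℤ}
    (h : k ∉ Set.range v.seq) (hv : Finsupp.single v (1 : ℂ) ∈ W) :
    Finsupp.single (v.insert k) (1 : ℂ) ∈ W := by
  have h1 : psi k (Finsupp.single v (1 : ℂ)) ∈ W := hpsi k _ hv
  rw [psi_single, if_neg h] at h1
  have h2 := W.smul_mem ((-1 : ℂ) ^ v.insIdx k) h1
  rwa [smul_smul, ← mul_pow, neg_mul_neg, one_mul, one_pow, one_smul] at h2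

theorem reach (W : Submodule ℂ Fock)
    (hpsi : ∀ k : ℤ, ∀ x ∈ W, psi k x ∈ W)
    (hpsiStar : ∀ k : ℤ, ∀ x ∈ W, psiStar k x ∈ W) :
    ∀ n : ℕ, ∀ v w : SIM,
      (Set.range v.seq \ Set.range w.seq).ncard +
        (Set.range w.seq \ Set.range v.seq).ncard ≤ n →
      Finsupp.single v (1 : ℂ) ∈ W → Finsupp.single w (1 : ℂ) ∈ W := by
  intro n
  induction n with
  | zero =>
    intro v w hn hv
    have hA : Set.range v.seq \ Set.range w.seq = ∅ := by
      rw [← Set.ncard_eq_zero (SIM.diff_finite v w)]; omega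
    have hB : Set.range w.seq \ Set.range v.seq = ∅ := by
      rw [← Set.ncard_eq_zero (SIM.diff_finite w v)]; omega
    have : v = w := SIM.eq_of_range_eq
      (Set.Subset.antisymm (Set.diff_eq_empty.mp hA) (Set.diff_eq_empty.mp hB))
    rwa [← this]
  | succ n ih =>
    intro v w hn hv
    by_cases hA : (Set.range v.seq \ Set.range w.seq).Nonempty
    · obtain ⟨k, hk⟩ := hA
      have hv' := single_delete_mem hpsiStar hk.1 hv
      apply ih (v.delete k) w ?_ hv'
      have hr : Set.range (v.delete k).seq = Set.range v.seq \ {k} := SIM.range_delete hk.1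
      have e1 : Set.range (v.delete k).seq \ Set.range w.seq =
          (Set.range v.seq \ Set.range w.seq) \ {k} := by
        rw [hr]; ext z; simp only [Set.mem_diff, Set.mem_singleton_iff]; tauto
      have e2 : Set.range w.seq \ Set.range (v.delete k).seq =
          Set.range w.seq \ Set.range v.seq := by
        rw [hr]; ext z; simp only [Set.mem_diff, Set.mem_singleton_iff]
        constructor
        · rintro ⟨h1, h2⟩
          refine ⟨h1, fun h3 => h2 ⟨h3, fun h4 => hk.2 (h4 ▸ h1)⟩⟩
        · rintro ⟨h1, h2⟩
          exact ⟨h1, fun h3 => h2 h3.1⟩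
      rw [e1, e2]
      have hc : ((Set.range v.seq \ Set.range w.seq) \ {k}).ncard =
          (Set.range v.seq \ Set.range w.seq).ncard - 1 :=
        Set.ncard_diff_singleton_of_mem hk
      have hpos : 0 < (Set.range v.seq \ Set.range w.seq).ncard :=
        Set.ncard_pos (SIM.diff_finite v w) |>.mpr ⟨k, hk⟩
      omega
    · by_cases hB : (Set.range w.seq \ Set.range v.seq).Nonempty
      · obtain ⟨k, hk⟩ := hB
        have hv' := single_insert_mem hpsi hk.2 hv
        apply ih (v.insert k) w ?_ hv'
        have hr : Set.range (v.insert k).seq = Set.range v.seq ∪ {k} :=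
          SIM.range_insert hk.2
        have e1 : Set.range (v.insert k).seq \ Set.range w.seq =
            Set.range v.seq \ Set.range w.seq := by
          rw [hr]; ext z
          simp only [Set.mem_diff, Set.mem_union, Set.mem_singleton_iff]
          constructor
          · rintro ⟨h1 | rfl, h2⟩
            · exact ⟨h1, h2⟩
            · exact absurd hk.1 h2
          · rintro ⟨h1, h2⟩; exact ⟨Or.inl h1, h2⟩
        have e2 : Set.range w.seq \ Set.range (v.insert k).seq =
            (Set.range w.seq \ Set.range v.seq) \ {k} := by
          rw [hr]; ext z
          simp only [Set.mem_diff, Set.mem_union, Set.mem_singleton_iff]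
          tauto
        rw [e1, e2]
        have hAe : Set.range v.seq \ Set.range w.seq = ∅ :=
          Set.not_nonempty_iff_eq_empty.mp hA
        have hc : ((Set.range w.seq \ Set.range v.seq) \ {k}).ncard =
            (Set.range w.seq \ Set.range v.seq).ncard - 1 :=
          Set.ncard_diff_singleton_of_mem hk
        have hpos : 0 < (Set.range w.seq \ Set.range v.seq).ncard :=
          Set.ncard_pos (SIM.diff_finite w v) |>.mpr ⟨k, hk⟩
        rw [hAe] at hn ⊢
        simp only [Set.ncard_empty] at hn ⊢
        omega
      · have hAe := Set.not_nonempty_iff_eq_empty.mp hA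
        have hBe := Set.not_nonempty_iff_eq_empty.mp hB
        have : v = w := SIM.eq_of_range_eq
          (Set.Subset.antisymm (Set.diff_eq_empty.mp hAe) (Set.diff_eq_empty.mp hBe))
        rwa [← this]

theorem isolate (W : Submodule ℂ Fock)
    (hpsi : ∀ k : ℤ, ∀ x ∈ W, psi k x ∈ W)
    (hpsiStar : ∀ k : ℤ, ∀ x ∈ W, psiStar k x ∈ W) :
    ∀ n : ℕ, ∀ x : Fock, x ∈ W → x.support.card ≤ n → ∀ v ∈ x.support,
      Finsupp.single v (1 : ℂ) ∈ W := by
  intro n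
  induction n with
  | zero =>
    intro x _ hc v hv
    rw [Nat.le_zero, Finset.card_eq_zero] at hc
    simp [hc] at hv
  | succ n ih =>
    intro x hx hc v hv
    by_cases hs : ∃ w ∈ x.support, w ≠ v
    · obtain ⟨w, hw, hwv⟩ := hs
      have hr : Set.range v.seq ≠ Set.range w.seq := fun h => hwv (SIM.eq_of_range_eq h.symm)
      have hkex : ∃ k : ℤ, (k ∈ Set.range v.seq ∧ k ∉ Set.range w.seq) ∨
          (k ∉ Set.range v.seq ∧ k ∈ Set.range w.seq) := by
        by_contra hK
        push_neg at hK
        apply hr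
        ext z
        have := hK z
        tauto
      obtain ⟨k, hk⟩ := hkex
      have main : ∀ y : Fock, y ∈ W → y v = x v → (∀ u : SIM, y u ≠ 0 → x u ≠ 0) →
          y w = 0 → Finsupp.single v (1 : ℂ) ∈ W := by
        intro y hyW hyv hzero hw0
        have hsub : y.support ⊆ x.support.erase w := by
          intro u hu
          rw [Finsupp.mem_support_iff] at hu
          rw [Finset.mem_erase, Finsupp.mem_support_iff]
          exact ⟨fun h => hu (h ▸ hw0), hzero u hu⟩
        refine ih y hyW ?_ v ?_
        · have h1 : y.support.card ≤ (x.support.erase w).card := Finset.card_le_card hsub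
          have h2 : (x.support.erase w).card = x.support.card - 1 :=
            Finset.card_erase_of_mem hw
          omega
        · rw [Finsupp.mem_support_iff, hyv]
          exact Finsupp.mem_support_iff.mp hv
      rcases hk with ⟨h1, h2⟩ | ⟨h1, h2⟩
      · refine main (psi k (psiStar k x)) (hpsi _ _ (hpsiStar _ _ hx)) ?_ ?_ ?_
        · rw [D_apply, if_pos h1]
        · intro u hu
          rw [D_apply] at hu
          split_ifs at hu with hP
          all_goals first | exact hu | exact absurd rfl hu
        · rw [D_apply, if_neg h2]
      · refine main (psiStar k (psi k x)) (hpsiStar _ _ (hpsi _ _ hx)) ?_ ?_ ?_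
        · rw [D'_apply, if_pos h1]
        · intro u hu
          rw [D'_apply] at hu
          split_ifs at hu with hP
          all_goals first | exact hu | exact absurd rfl hu
        · rw [D'_apply, if_neg (by simpa using h2)]
    · push_neg at hs
      have hsub : x.support ⊆ {v} := fun u hu => Finset.mem_singleton.mpr (hs u hu)
      have hxv : x = Finsupp.single v (x v) := Finsupp.support_subset_singleton.mp hsub
      have hx0 : x v ≠ 0 := Finsupp.mem_support_iff.mp hv
      have heq : Finsupp.single v (1 : ℂ) = (x v)⁻¹ • x := by
        nth_rewrite 2 [hxv]
        rw [Finsupp.smul_single', inv_mul_cancel₀ hx0]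
      rw [heq]
      exact W.smul_mem _ hx

end Aux

/-- The fermionic Fock space `𝓕` is irreducible under the Clifford operators:
every ℂ-linear subspace invariant under all `ψ(k)` and `ψ*(k)` and containing a
nonzero vector is all of `𝓕`. -/
theorem fock_irreducible_under_clifford (W : Submodule ℂ Fock)
    (hpsi : ∀ k : ℤ, ∀ x ∈ W, psi k x ∈ W)
    (hpsiStar : ∀ k : ℤ, ∀ x ∈ W, psiStar k x ∈ W)
    (hne : ∃ x ∈ W, x ≠ 0) : W = ⊤ := by
  obtain ⟨x, hxW, hx0⟩ := hne
  obtain ⟨v, hv⟩ := Finsupp.support_nonempty_iff.mpr hx0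
  have hv1 : Finsupp.single v (1 : ℂ) ∈ W :=
    isolate W hpsi hpsiStar x.support.card x hxW le_rfl v hv
  have hall : ∀ w : SIM, Finsupp.single w (1 : ℂ) ∈ W := fun w =>
    reach W hpsi hpsiStar _ v w le_rfl hv1
  rw [eq_top_iff]
  intro y _
  rw [← Finsupp.sum_single y]
  apply Submodule.finsuppSum_mem
  intro a _
  have h : Finsupp.single a (y a) = (y a) • Finsupp.single a (1 : ℂ) := by
    rw [Finsupp.smul_single', mul_one]
  rw [h]
  exact W.smul_mem _ (hall a)
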